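/- Correspondence between projective families and exchangeable distributions on ℕ: for a finite relational vocabulary L, the map sending a probability measure P on the local σ-algebra of L-structures on ℕ to the family (P_D) defined by P_D(X) := P(ℕ_X) (for finite D ⊆ ℕ and L-structure X on D, where ℕ_X is the set of L-structures on ℕ extending X) is a bijection between exchangeable L-distributions on ℕ and projective L families of distributions. Exchangeability of P (invariance of P(ℕ_X) under all permutations of ℕ applied to X) corresponds exactly to projectivity plus well-definedness of the family. -/

import Mathlib

open MeasureTheory
open scoped ENNReal

/-- An `L`-structure on domain `D`: an interpretation of each relation symbol `R`
(of arity `ar R`) as a set of `ar R`-tuples from `D`. -/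
def Struc (L : Type) (ar : L → ℕ) (D : Type) : Type :=
  ∀ R : L, (Fin (ar R) → D) → Prop

/-- `ω` (a structure on `D`) extends the image of `X` (a structure on `D'`) along the
injection `ι`; equivalently, `ι` is an embedding of structures from `X` to `ω`. -/
def ExtendsAlong {L : Type} {ar : L → ℕ} {D' D : Type} (ι : D' ↪ D)
    (X : Struc L ar D') (ω : Struc L ar D) : Prop :=
  ∀ (R : L) (s : Fin (ar R) → D'), ω R (fun i => ι (s i)) ↔ X R s

/-- Transport of a structure along a bijection. -/
def Struc.map {L : Type} {ar : L → ℕ} {D D' : Type} (e : D ≃ D')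
    (X : Struc L ar D) : Struc L ar D' :=
  fun R t => X R (fun i => e.symm (t i))

/-- The reduct of a structure to a subvocabulary `E`. -/
def reduct {L : Type} {ar : L → ℕ} (E : Set L) {D : Type} (X : Struc L ar D) :
    Struc ↥E (fun R => ar ↑R) D :=
  fun R t => X ↑R t

/-- A family of distributions indexed by all finite sets is projective if marginals
are invariant under injections. -/
def Projective {L : Type} {ar : L → ℕ}
    (P : ∀ (D : Type) [Fintype D], PMF (Struc L ar D)) : Prop :=
  ∀ (D' D : Type) [Fintype D'] [Fintype D] (ι : D' ↪ D) (X : Struc L ar D'),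
    P D' X = (P D).toOuterMeasure {ω | ExtendsAlong ι X ω}

/-- A structured (`S`-input, `T`-output) family of distributions is projective if
marginals are invariant under embeddings of input structures. -/
def ProjFam {S T : Type} {arS : S → ℕ} {arT : T → ℕ}
    (P : ∀ (D : Type) [Fintype D], Struc S arS D → PMF (Struc T arT D)) : Prop :=
  ∀ (D' D : Type) [Fintype D'] [Fintype D] (ι : D' ↪ D)
    (A' : Struc S arS D') (A : Struc S arS D), ExtendsAlong ι A' A →
    ∀ X : Struc T arT D',
      P D' A' X = (P D A).toOuterMeasure {ω | ExtendsAlong ι X ω}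

/-- The cylinder set of structures on `ℕ` extending `X` along `ι`. -/
def CylN {L : Type} (ar : L → ℕ) {D : Type} (ι : D ↪ ℕ) (X : Struc L ar D) :
    Set (Struc L ar ℕ) :=
  {ω | ExtendsAlong ι X ω}

/-- The local σ-algebra on the set of `L`-structures on `ℕ`, generated by the
cylinder sets. -/
instance localMS (L : Type) (ar : L → ℕ) : MeasurableSpace (Struc L ar ℕ) :=
  MeasurableSpace.generateFrom
    {S | ∃ (n : ℕ) (ι : Fin n ↪ ℕ) (X : Struc L ar (Fin n)), S = CylN ar ι X}

/-- Exchangeability of a distribution on the local σ-algebra: invariance of cylinder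
probabilities under all permutations of `ℕ`. -/
def Exch {L : Type} (ar : L → ℕ) (P : Measure (Struc L ar ℕ)) : Prop :=
  ∀ (e : ℕ ≃ ℕ) (n : ℕ) (ι : Fin n ↪ ℕ) (X : Struc L ar (Fin n)),
    P (CylN ar ι X) = P (CylN ar (ι.trans e.toEmbedding) X)

namespace St10

variable {L : Type} {ar : L → ℕ}

/-- Pullback of a structure along a map. -/
def pull {D' D : Type} (f : D' → D) (ω : Struc L ar D) : Struc L ar D' :=
  fun R t => ω R (fun i => f (t i))

lemma pull_pull {D'' D' D : Type} (f : D'' → D') (g : D' → D) (ω : Struc L ar D) :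
    pull f (pull g ω) = pull (fun i => g (f i)) ω := rfl

lemma extendsAlong_iff {D' D : Type} (ι : D' ↪ D) (X : Struc L ar D') (ω : Struc L ar D) :
    ExtendsAlong ι X ω ↔ pull ι ω = X := by
  constructor
  · intro h; funext R s; exact propext (h R s)
  · intro h R s; rw [← h]; exact Iff.rfl

lemma cylN_eq {D : Type} (ι : D ↪ ℕ) (X : Struc L ar D) :
    CylN ar ι X = pull ι ⁻¹' {X} :=
  Set.ext fun ω => (extendsAlong_iff ι X ω).trans (by simp)

lemma pull_surj {D' D : Type} {f : D' → D} (hf : Function.Injective f) :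
    Function.Surjective (pull f : Struc L ar D → Struc L ar D') := by
  intro X
  refine ⟨fun R t => ∃ s, (∀ i, f (s i) = t i) ∧ X R s, ?_⟩
  funext R s
  show (∃ s', (∀ i, f (s' i) = f (s i)) ∧ X R s') = X R s
  apply propext; constructor
  · rintro ⟨s', hs', hX⟩
    have : s' = s := funext fun i => hf (hs' i)
    rwa [← this]
  · intro h; exact ⟨s, fun _ => rfl, h⟩

lemma pull_inj {D' D : Type} {f : D' → D} (hf : Function.Surjective f) :
    Function.Injective (pull f : Struc L ar D → Struc L ar D') := by
  intro Y Y' h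
  choose g hg using hf
  funext R t
  have h1 := congrFun (congrFun h R) (fun i => g (t i))
  simp only [pull] at h1
  have ht : (fun i => f (g (t i))) = t := funext fun i => hg (t i)
  rw [ht] at h1
  exact h1

/-- map along an equiv is pull along the inverse -/
lemma map_eq_pull {D D' : Type} (e : D ≃ D') (X : Struc L ar D) :
    Struc.map e X = pull (⇑e.symm) X := rfl

abbrev pullN (n : ℕ) : Struc L ar ℕ → Struc L ar (Fin n) :=
  pull (fun i : Fin n => (i : ℕ))

variable (L ar) in
/-- The algebra of cylinder sets determined by an initial segment. -/
def Alg : Set (Set (Struc L ar ℕ)) :=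
  {A | ∃ (n : ℕ) (S : Set (Struc L ar (Fin n))), A = pullN n ⁻¹' S}

lemma rep_lift {n m : ℕ} (h : n ≤ m) (S : Set (Struc L ar (Fin n))) :
    pullN n ⁻¹' S = pullN m ⁻¹' (pull (Fin.castLE h) ⁻¹' S) := rfl

lemma exists_rep_pair {A B : Set (Struc L ar ℕ)} (hA : A ∈ Alg L ar) (hB : B ∈ Alg L ar) :
    ∃ (n : ℕ) (S : Set (Struc L ar (Fin n))) (T : Set (Struc L ar (Fin n))), A = pullN n ⁻¹' S ∧ B = pullN n ⁻¹' T := by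
  obtain ⟨n1, S1, rfl⟩ := hA; obtain ⟨n2, S2, rfl⟩ := hB
  exact ⟨max n1 n2, _, _, rep_lift (le_max_left _ _) S1, rep_lift (le_max_right _ _) S2⟩

lemma alg_inter {A B : Set (Struc L ar ℕ)} (hA : A ∈ Alg L ar) (hB : B ∈ Alg L ar) :
    A ∩ B ∈ Alg L ar := by
  obtain ⟨n, S, T, rfl, rfl⟩ := exists_rep_pair hA hB
  exact ⟨n, S ∩ T, (Set.preimage_inter).symm⟩

lemma alg_diff {A B : Set (Struc L ar ℕ)} (hA : A ∈ Alg L ar) (hB : B ∈ Alg L ar) :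
    A \ B ∈ Alg L ar := by
  obtain ⟨n, S, T, rfl, rfl⟩ := exists_rep_pair hA hB
  exact ⟨n, S \ T, (Set.preimage_diff _ _ _).symm⟩

instance strucFinite {D : Type} [Finite L] [Finite D] : Finite (Struc L ar D) := by
  unfold Struc; infer_instance

end St10

namespace St10

variable {L : Type} {ar : L → ℕ}

lemma nu_add {α : Type} (p : PMF α) {U V : Set α} (h : Disjoint U V) :
    p.toOuterMeasure (U ∪ V) = p.toOuterMeasure U + p.toOuterMeasure V := by
  rw [PMF.toOuterMeasure_apply, PMF.toOuterMeasure_apply, PMF.toOuterMeasure_apply,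
    Set.indicator_union_of_disjoint h, ← ENNReal.tsum_add]

variable [Fintype L] (Q : ∀ (D : Type) [Fintype D], PMF (Struc L ar D))

lemma nu_pull (hQ : Projective Q) {D' D : Type} [Fintype D'] [Fintype D] (ι : D' ↪ D)
    (S : Set (Struc L ar D')) :
    (Q D).toOuterMeasure (pull ι ⁻¹' S) = (Q D').toOuterMeasure S := by
  classical
  letI : MeasurableSpace (Struc L ar D) := ⊤
  have hms : ∀ U : Set (Struc L ar D), MeasurableSet U := fun _ => MeasurableSpace.measurableSet_top
  have hfib : ∀ X : Struc L ar D',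
      (Q D).toMeasure (pull ι ⁻¹' {X}) = Q D' X := by
    intro X
    rw [PMF.toMeasure_apply_eq_toOuterMeasure_apply _ (hms _)]
    have hset : {ω : Struc L ar D | ExtendsAlong ι X ω} = pull ι ⁻¹' {X} :=
      Set.ext fun ω => (extendsAlong_iff ι X ω).trans (by simp)
    rw [← hset, ← hQ D' D ι X]
  have hdec : pull ι ⁻¹' S = ⋃ X : S, pull ι ⁻¹' {(X : Struc L ar D')} := by
    ext ω
    simp only [Set.mem_preimage, Set.mem_iUnion, Set.mem_singleton_iff]
    exact ⟨fun h => ⟨⟨_, h⟩, rfl⟩, by rintro ⟨⟨X, hX⟩, h⟩; rw [h]; exact hX⟩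
  calc
    (Q D).toOuterMeasure (pull ι ⁻¹' S)
        = (Q D).toMeasure (pull ι ⁻¹' S) :=
          (PMF.toMeasure_apply_eq_toOuterMeasure_apply _ (hms _)).symm
    _ = (Q D).toMeasure (⋃ X : S, pull ι ⁻¹' {(X : Struc L ar D')}) := by rw [hdec]
    _ = ∑' X : S, (Q D).toMeasure (pull ι ⁻¹' {(X : Struc L ar D')}) := by
          refine measure_iUnion ?_ (fun _ => hms _)
          intro X Y hXY
          refine Set.disjoint_left.mpr fun ω h1 h2 => hXY ?_
          exact Subtype.ext ((Set.mem_singleton_iff.mp h1).symm.trans (Set.mem_singleton_iff.mp h2))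
    _ = ∑' X : S, Q D' (X : Struc L ar D') := tsum_congr fun X => hfib _
    _ = (Q D').toOuterMeasure S := by rw [PMF.toOuterMeasure_apply, ← tsum_subtype]

open Classical in
/-- Additive content from a projective family. -/
noncomputable def cont : Set (Struc L ar ℕ) → ℝ≥0∞ := fun A =>
  if h : ∃ (n : ℕ) (S : Set (Struc L ar (Fin n))), A = pullN n ⁻¹' S then
    (Q (Fin h.choose)).toOuterMeasure h.choose_spec.choose
  else ⊤

lemma rep_eq_of_le (hQ : Projective Q) {n m : ℕ} (hle : n ≤ m) {S : Set (Struc L ar (Fin n))}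
    {T : Set (Struc L ar (Fin m))} (h : pullN n ⁻¹' S = pullN m ⁻¹' T) :
    (Q (Fin n)).toOuterMeasure S = (Q (Fin m)).toOuterMeasure T := by
  rw [rep_lift hle] at h
  have hsurj : Function.Surjective (pullN (L := L) (ar := ar) m) :=
    pull_surj (fun i j hij => Fin.ext hij)
  have hTT : pull (Fin.castLE hle) ⁻¹' S = T := hsurj.preimage_injective h
  rw [← hTT]
  exact (nu_pull Q hQ (⟨Fin.castLE hle, Fin.castLE_injective hle⟩ : Fin n ↪ Fin m) S).symm

lemma rep_eq (hQ : Projective Q) {n m : ℕ} {S : Set (Struc L ar (Fin n))}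
    {T : Set (Struc L ar (Fin m))} (h : pullN n ⁻¹' S = pullN m ⁻¹' T) :
    (Q (Fin n)).toOuterMeasure S = (Q (Fin m)).toOuterMeasure T := by
  rcases le_total n m with hle | hle
  · exact rep_eq_of_le Q hQ hle h
  · exact (rep_eq_of_le Q hQ hle h.symm).symm

lemma cont_eq (hQ : Projective Q) {n : ℕ} (S : Set (Struc L ar (Fin n))) :
    cont Q (pullN n ⁻¹' S) = (Q (Fin n)).toOuterMeasure S := by
  have hmem : ∃ (m : ℕ) (T : Set (Struc L ar (Fin m))), pullN n ⁻¹' S = pullN m ⁻¹' T :=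
    ⟨n, S, rfl⟩
  rw [cont, dif_pos hmem]
  exact rep_eq Q hQ hmem.choose_spec.choose_spec.symm

lemma cont_empty (hQ : Projective Q) : cont Q ∅ = 0 := by
  have : (∅ : Set (Struc L ar ℕ)) = pullN 0 ⁻¹' ∅ := rfl
  rw [this, cont_eq Q hQ]
  simp [PMF.toOuterMeasure_apply]

lemma cont_top {A : Set (Struc L ar ℕ)} (hA : A ∉ Alg L ar) : cont Q A = ⊤ := dif_neg hA

lemma cont_carath (hQ : Projective Q) {s : Set (Struc L ar ℕ)} (hs : s ∈ Alg L ar)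
    (t : Set (Struc L ar ℕ)) :
    cont Q (t ∩ s) + cont Q (t \ s) ≤ cont Q t := by
  by_cases ht : t ∈ Alg L ar
  · obtain ⟨n, T, S, rfl, rfl⟩ := exists_rep_pair ht hs
    rw [← Set.preimage_inter, ← Set.preimage_diff, cont_eq Q hQ, cont_eq Q hQ, cont_eq Q hQ]
    have hdisj : Disjoint (T ∩ S) (T \ S) :=
      Set.disjoint_left.mpr fun x hx1 hx2 => hx2.2 hx1.2
    rw [← nu_add _ hdisj, Set.inter_union_diff]
  · rw [cont_top Q ht]; exact le_top

end St10

namespace St10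

variable {L : Type} {ar : L → ℕ} [Fintype L]

/-- Compactness: a decreasing sequence of nonempty cylinder-algebra sets has
nonempty intersection. -/
lemma alg_compact {C : ℕ → Set (Struc L ar ℕ)} (hC : ∀ k, C k ∈ Alg L ar)
    (hanti : Antitone C) (hne : ∀ k, (C k).Nonempty) : (⋂ k, C k).Nonempty := by
  classical
  let I := Σ R : L, (Fin (ar R) → ℕ)
  let ψ : (I → Bool) → Struc L ar ℕ := fun f R t => f ⟨R, t⟩ = true
  have hsurj : Function.Surjective ψ := by
    intro ω
    refine ⟨fun i => decide (ω i.1 i.2), ?_⟩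
    funext R t
    exact decide_eq_true_eq
  have hZc : ∀ k, IsClosed (ψ ⁻¹' C k) := by
    intro k
    obtain ⟨m, T, hT⟩ := hC k
    rw [hT]
    have hdec : ψ ⁻¹' (pullN m ⁻¹' T) =
        ⋃ X ∈ T, {f : I → Bool | pullN m (ψ f) = X} := by
      ext f
      simp only [Set.mem_preimage, Set.mem_iUnion, Set.mem_setOf_eq]
      exact ⟨fun h => ⟨_, h, rfl⟩, by rintro ⟨X, hX, h⟩; rw [h]; exact hX⟩
    rw [hdec]
    refine Set.Finite.isClosed_biUnion (Set.toFinite T) ?_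
    intro X _
    have hX : {f : I → Bool | pullN m (ψ f) = X} =
        ⋂ (R : L) (t : Fin (ar R) → Fin m),
          {f : I → Bool | f ⟨R, fun i => ((t i : ℕ))⟩ = decide (X R t)} := by
      ext f
      simp only [Set.mem_setOf_eq, Set.mem_iInter]
      constructor
      · intro h R t
        have h2 := congrFun (congrFun h R) t
        change (f ⟨R, fun i => ((t i : ℕ))⟩ = true) = X R t at h2
        rw [eq_iff_iff] at h2
        cases hfb : f ⟨R, fun i => ((t i : ℕ))⟩ <;> by_cases hXR : X R t <;> simp_all
      · intro h
        funext R t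
        change (f ⟨R, fun i => ((t i : ℕ))⟩ = true) = X R t
        rw [h R t]
        exact decide_eq_true_eq
    rw [hX]
    exact isClosed_iInter fun R => isClosed_iInter fun t =>
      isClosed_singleton.preimage (continuous_apply _)
  have hmono : Antitone (fun k => ψ ⁻¹' C k) := fun a b hab => Set.preimage_mono (hanti hab)
  have key := IsCompact.nonempty_iInter_of_directed_nonempty_isCompact_isClosed
      (fun k => ψ ⁻¹' C k) hmono.directed_ge
      (fun k => by
        obtain ⟨x, hx⟩ := hne k
        obtain ⟨f, rfl⟩ := hsurj x
        exact ⟨f, hx⟩)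
      (fun k => (hZc k).isCompact)
      hZc
  obtain ⟨f, hf⟩ := key
  rw [Set.mem_iInter] at hf
  exact ⟨ψ f, Set.mem_iInter.mpr fun k => hf k⟩

variable (Q : ∀ (D : Type) [Fintype D], PMF (Struc L ar D))

lemma cont_subadd (hQ : Projective Q) {A : Set (Struc L ar ℕ)} (hA : A ∈ Alg L ar)
    {t : ℕ → Set (Struc L ar ℕ)} (ht : ∀ i, t i ∈ Alg L ar) (hsub : A ⊆ ⋃ i, t i) :
    cont Q A ≤ ∑' i, cont Q (t i) := by
  classical
  set C : ℕ → Set (Struc L ar ℕ) := fun k => A \ ⋃ i ∈ Finset.range k, t i with hCdef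
  have hCmem : ∀ k, C k ∈ Alg L ar := by
    intro k
    induction k with
    | zero => simpa [C] using hA
    | succ k ih =>
        have hsucc : C (k + 1) = C k \ t k := by
          simp only [C, Finset.range_add_one, Finset.set_biUnion_insert]
          rw [Set.diff_diff, Set.union_comm]
        rw [hsucc]
        exact alg_diff ih (ht k)
  have hanti : Antitone C := by
    intro a b hab
    refine Set.diff_subset_diff_right ?_
    exact Set.biUnion_subset_biUnion_left (fun i hi => Finset.mem_range.mpr
      (lt_of_lt_of_le (Finset.mem_range.mp hi) hab))
  have hiInter : ⋂ k, C k = ∅ := by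
    rw [Set.eq_empty_iff_forall_notMem]
    intro ω hω
    rw [Set.mem_iInter] at hω
    obtain ⟨i, hi⟩ := Set.mem_iUnion.mp (hsub (hω 0).1)
    exact (hω (i + 1)).2 (Set.mem_biUnion (Finset.mem_range.mpr (Nat.lt_succ_self i)) hi)
  have hK : ∃ K, C K = ∅ := by
    by_contra h
    push_neg at h
    have := alg_compact hCmem hanti fun k => h k
    rw [hiInter] at this
    exact Set.not_nonempty_empty this
  obtain ⟨K, hK⟩ := hK
  have hcov : A ⊆ ⋃ i ∈ Finset.range K, t i := by
    rw [← Set.diff_eq_empty]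
    exact hK
  -- common representation level
  choose nt St hSt using ht
  obtain ⟨nA, SA, hSA⟩ := hA
  set N := max nA (Finset.sup (Finset.range K) nt) with hN
  have hnA : nA ≤ N := le_max_left _ _
  have hnt : ∀ i ∈ Finset.range K, nt i ≤ N :=
    fun i hi => le_trans (Finset.le_sup hi) (le_max_right _ _)
  set SA' : Set (Struc L ar (Fin N)) := pull (Fin.castLE hnA) ⁻¹' SA with hSA'
  have hArep : A = pullN N ⁻¹' SA' := by rw [hSA, rep_lift hnA]
  set T' : ℕ → Set (Struc L ar (Fin N)) :=
    fun i => if h : nt i ≤ N then pull (Fin.castLE h) ⁻¹' (St i) else ∅ with hT'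
  have htrep : ∀ i ∈ Finset.range K, t i = pullN N ⁻¹' T' i := by
    intro i hi
    rw [hT']
    simp only [dif_pos (hnt i hi)]
    rw [hSt i, rep_lift (hnt i hi)]
  have hconts : ∀ i ∈ Finset.range K, cont Q (t i) = (Q (Fin N)).toOuterMeasure (T' i) := by
    intro i hi
    rw [htrep i hi, cont_eq Q hQ]
  have hNinj : Function.Injective (fun i : Fin N => (i : ℕ)) := fun a b hab => Fin.ext hab
  have hsub' : SA' ⊆ ⋃ i ∈ Finset.range K, T' i := by
    intro x hx
    obtain ⟨ω, rfl⟩ := pull_surj hNinj x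
    have hωA : ω ∈ A := by rw [hArep]; exact hx
    obtain ⟨i, hi, hit⟩ := Set.mem_iUnion₂.mp (hcov hωA)
    have : ω ∈ pullN N ⁻¹' T' i := by rw [← htrep i hi]; exact hit
    exact Set.mem_biUnion hi this
  calc cont Q A = (Q (Fin N)).toOuterMeasure SA' := by rw [hArep, cont_eq Q hQ]
    _ ≤ (Q (Fin N)).toOuterMeasure (⋃ i ∈ Finset.range K, T' i) := measure_mono hsub'
    _ ≤ ∑ i ∈ Finset.range K, (Q (Fin N)).toOuterMeasure (T' i) :=
        measure_biUnion_finset_le _ _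
    _ = ∑ i ∈ Finset.range K, cont Q (t i) :=
        Finset.sum_congr rfl fun i hi => (hconts i hi).symm
    _ ≤ ∑' i, cont Q (t i) := ENNReal.sum_le_tsum _

end St10

namespace St10

variable {L : Type} {ar : L → ℕ}

lemma cyl_transport {D D₂ : Type} (e : D ≃ D₂) (ι : D ↪ ℕ) (X : Struc L ar D) :
    CylN ar ι X = CylN ar (e.symm.toEmbedding.trans ι) (Struc.map e X) := by
  rw [cylN_eq, cylN_eq]
  ext ω
  simp only [Set.mem_preimage, Set.mem_singleton_iff]
  have hcomp : pull (⇑(e.symm.toEmbedding.trans ι)) ω = pull (⇑e.symm) (pull ι ω) := rfl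
  rw [hcomp, map_eq_pull]
  constructor
  · rintro rfl; rfl
  · intro h
    exact pull_inj e.symm.surjective h

lemma cyl_mem_alg {D : Type} [Fintype D] (ι : D ↪ ℕ) (X : Struc L ar D) :
    CylN ar ι X ∈ Alg L ar := by
  classical
  set m := (Finset.univ.sup fun d : D => ι d) + 1 with hm
  have hlt : ∀ d, ι d < m := fun d => Nat.lt_succ_of_le (Finset.le_sup (Finset.mem_univ d))
  set κ : D → Fin m := fun d => ⟨ι d, hlt d⟩ with hκ
  refine ⟨m, pull κ ⁻¹' {X}, ?_⟩
  rw [cylN_eq]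
  rfl

lemma cyl_measurable {D : Type} [Fintype D] (ι : D ↪ ℕ) (X : Struc L ar D) :
    MeasurableSet (CylN ar ι X) := by
  rw [cyl_transport (Fintype.equivFin D) ι X]
  exact MeasurableSpace.measurableSet_generateFrom ⟨_, _, _, rfl⟩

lemma alg_measurable {A : Set (Struc L ar ℕ)} [Fintype L] (hA : A ∈ Alg L ar) :
    MeasurableSet A := by
  obtain ⟨n, S, rfl⟩ := hA
  have hdec : pullN n ⁻¹' S = ⋃ X : S, CylN ar Fin.valEmbedding (X : Struc L ar (Fin n)) := by
    ext ω
    simp only [Set.mem_preimage, Set.mem_iUnion, cylN_eq, Set.mem_singleton_iff]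
    refine ⟨fun h => ⟨⟨_, h⟩, rfl⟩, ?_⟩
    rintro ⟨⟨X, hX⟩, h⟩
    have h' : pullN n ω = X := h
    rw [h']
    exact hX
  rw [hdec]
  exact MeasurableSet.iUnion fun X => cyl_measurable _ _

lemma localMS_eq_generateFrom_alg [Fintype L] :
    (localMS L ar : MeasurableSpace (Struc L ar ℕ)) = MeasurableSpace.generateFrom (Alg L ar) := by
  refine le_antisymm ?_ ?_
  · exact MeasurableSpace.generateFrom_le fun s hs => by
      obtain ⟨n, ι, X, rfl⟩ := hs
      exact MeasurableSpace.measurableSet_generateFrom (cyl_mem_alg ι X)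
  · exact MeasurableSpace.generateFrom_le fun s hs => alg_measurable hs

variable [Fintype L] (Q : ∀ (D : Type) [Fintype D], PMF (Struc L ar D))

/-- The outer measure extending the content. -/
noncomputable def outer (hQ : Projective Q) : OuterMeasure (Struc L ar ℕ) :=
  OuterMeasure.ofFunction (cont Q) (cont_empty Q hQ)

lemma outer_eq_cont (hQ : Projective Q) {A : Set (Struc L ar ℕ)} (hA : A ∈ Alg L ar) :
    outer Q hQ A = cont Q A := by
  refine le_antisymm (OuterMeasure.ofFunction_le A) ?_
  rw [outer, OuterMeasure.ofFunction_apply]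
  refine le_iInf fun t => le_iInf fun hsub => ?_
  by_cases ht : ∀ i, t i ∈ Alg L ar
  · exact cont_subadd Q hQ hA ht hsub
  · push_neg at ht
    obtain ⟨i, hi⟩ := ht
    calc cont Q A ≤ ⊤ := le_top
      _ = cont Q (t i) := (cont_top Q hi).symm
      _ ≤ ∑' i, cont Q (t i) := ENNReal.le_tsum i

lemma le_carath (hQ : Projective Q) :
    (localMS L ar : MeasurableSpace (Struc L ar ℕ)) ≤ (outer Q hQ).caratheodory := by
  refine MeasurableSpace.generateFrom_le fun s hs => ?_
  obtain ⟨n, ι, X, rfl⟩ := hs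
  exact OuterMeasure.ofFunction_caratheodory fun t => cont_carath Q hQ (cyl_mem_alg ι X) t

/-- The Carathéodory extension measure of a projective family. -/
noncomputable def extMeasure (hQ : Projective Q) : Measure (Struc L ar ℕ) :=
  (outer Q hQ).toMeasure (le_carath Q hQ)

lemma extMeasure_alg (hQ : Projective Q) {A : Set (Struc L ar ℕ)} (hA : A ∈ Alg L ar) :
    extMeasure Q hQ A = cont Q A := by
  rw [extMeasure, MeasureTheory.toMeasure_apply _ _ (alg_measurable hA), outer_eq_cont Q hQ hA]

lemma cont_cyl (hQ : Projective Q) {D : Type} [Fintype D] (ι : D ↪ ℕ) (X : Struc L ar D) :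
    cont Q (CylN ar ι X) = Q D X := by
  classical
  set m := (Finset.univ.sup fun d : D => ι d) + 1 with hm
  have hlt : ∀ d, ι d < m := fun d => Nat.lt_succ_of_le (Finset.le_sup (Finset.mem_univ d))
  set κ : D ↪ Fin m := ⟨fun d => ⟨ι d, hlt d⟩, fun a b hab => ι.injective (congrArg Fin.val hab)⟩
    with hκ
  have hrep : CylN ar ι X = pullN m ⁻¹' (pull κ ⁻¹' {X}) := by rw [cylN_eq]; rfl
  rw [hrep, cont_eq Q hQ, nu_pull Q hQ κ, PMF.toOuterMeasure_apply_singleton]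

lemma extMeasure_cyl (hQ : Projective Q) {D : Type} [Fintype D] (ι : D ↪ ℕ) (X : Struc L ar D) :
    extMeasure Q hQ (CylN ar ι X) = Q D X := by
  rw [extMeasure_alg Q hQ (cyl_mem_alg ι X), cont_cyl Q hQ ι X]

lemma extMeasure_prob (hQ : Projective Q) : IsProbabilityMeasure (extMeasure Q hQ) := by
  constructor
  have huniv : (Set.univ : Set (Struc L ar ℕ)) = pullN 0 ⁻¹' Set.univ := rfl
  rw [huniv, extMeasure_alg Q hQ ⟨0, Set.univ, rfl⟩, cont_eq Q hQ]
  rw [PMF.toOuterMeasure_apply]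
  simp only [Set.indicator_univ]
  exact (Q (Fin 0)).tsum_coe

end St10

namespace St10

variable {L : Type} {ar : L → ℕ}

/-- Any two embeddings of `Fin n` into `ℕ` differ by a permutation of `ℕ`. -/
lemma exists_perm {n : ℕ} (ι1 ι2 : Fin n ↪ ℕ) :
    ∃ e : ℕ ≃ ℕ, ∀ i, e (ι1 i) = ι2 i := by
  classical
  have h1 : (Set.range ι1)ᶜ.Infinite := (Set.finite_range ι1).infinite_compl
  have h2 : (Set.range ι2)ᶜ.Infinite := (Set.finite_range ι2).infinite_compl
  haveI i1 : Infinite ↥(Set.range ⇑ι1)ᶜ := h1.to_subtype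
  haveI i2 : Infinite ↥(Set.range ⇑ι2)ᶜ := h2.to_subtype
  obtain ⟨d1⟩ := nonempty_denumerable ↥(Set.range ⇑ι1)ᶜ
  obtain ⟨d2⟩ := nonempty_denumerable ↥(Set.range ⇑ι2)ᶜ
  let eC : ↥(Set.range ⇑ι1)ᶜ ≃ ↥(Set.range ⇑ι2)ᶜ :=
    (@Denumerable.eqv _ d1).trans (@Denumerable.eqv _ d2).symm
  let eR : ↥(Set.range ⇑ι1) ≃ ↥(Set.range ⇑ι2) :=
    (Equiv.ofInjective ι1 ι1.injective).symm.trans (Equiv.ofInjective ι2 ι2.injective)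
  refine ⟨(Equiv.Set.sumCompl (Set.range ⇑ι1)).symm.trans
    ((eR.sumCongr eC).trans (Equiv.Set.sumCompl (Set.range ⇑ι2))), ?_⟩
  intro i
  have hmem : ι1 i ∈ Set.range ⇑ι1 := Set.mem_range_self i
  simp only [Equiv.trans_apply]
  rw [Equiv.Set.sumCompl_symm_apply_of_mem hmem]
  simp only [Equiv.sumCongr_apply, Sum.map_inl, Equiv.Set.sumCompl_apply_inl]
  have heR : eR ⟨ι1 i, hmem⟩ = ⟨ι2 i, Set.mem_range_self i⟩ := by
    simp only [eR, Equiv.trans_apply]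
    have : (Equiv.ofInjective ι1 ι1.injective).symm ⟨ι1 i, hmem⟩ = i := by
      rw [Equiv.symm_apply_eq]
      rfl
    rw [this]
    rfl
  rw [heR]

lemma exch_cyl {P : Measure (Struc L ar ℕ)} (hE : Exch ar P) {D : Type} [Fintype D]
    (ι1 ι2 : D ↪ ℕ) (X : Struc L ar D) :
    P (CylN ar ι1 X) = P (CylN ar ι2 X) := by
  have key : ∀ (n : ℕ) (κ1 κ2 : Fin n ↪ ℕ) (Y : Struc L ar (Fin n)),
      P (CylN ar κ1 Y) = P (CylN ar κ2 Y) := by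
    intro n κ1 κ2 Y
    obtain ⟨e, he⟩ := exists_perm κ1 κ2
    have htrans : κ1.trans e.toEmbedding = κ2 := by
      ext i
      exact he i
    rw [hE e n κ1 Y, htrans]
  rw [cyl_transport (Fintype.equivFin D) ι1 X, cyl_transport (Fintype.equivFin D) ι2 X]
  exact key _ _ _ _

/-- Canonical embedding of a finite type into `ℕ`. -/
noncomputable def embD (D : Type) [Fintype D] : D ↪ ℕ :=
  (Fintype.equivFin D).toEmbedding.trans Fin.valEmbedding

lemma cyl_pairwise_disjoint {D : Type} (ι : D ↪ ℕ) :
    Pairwise (Function.onFun Disjoint fun X : Struc L ar D => CylN ar ι X) := by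
  intro X Y hXY
  simp only [Function.onFun, cylN_eq]
  refine Set.disjoint_left.mpr fun ω h1 h2 => hXY ?_
  exact (Set.mem_singleton_iff.mp h1).symm.trans (Set.mem_singleton_iff.mp h2)

lemma cyl_cover {D : Type} (ι : D ↪ ℕ) :
    ⋃ X : Struc L ar D, CylN ar ι X = Set.univ := by
  rw [Set.eq_univ_iff_forall]
  intro ω
  rw [Set.mem_iUnion]
  exact ⟨pull ι ω, by rw [cylN_eq]; exact rfl⟩

variable [Fintype L]

/-- The family of marginals of a measure on structures on `ℕ`. -/
noncomputable def famOf (P : Measure (Struc L ar ℕ)) (hP : IsProbabilityMeasure P)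
    (D : Type) [Fintype D] : PMF (Struc L ar D) := by
  refine ⟨fun X => P (CylN ar (embD D) X), ?_⟩
  have hsum : ∑' X : Struc L ar D, P (CylN ar (embD D) X) = 1 := by
    haveI := Fintype.ofFinite (Struc L ar D)
    rw [← measure_iUnion (cyl_pairwise_disjoint _) (fun X => cyl_measurable _ _), cyl_cover]
    exact hP.measure_univ
  exact hsum ▸ ENNReal.summable.hasSum

lemma famOf_apply (P : Measure (Struc L ar ℕ)) (hP : IsProbabilityMeasure P)
    (D : Type) [Fintype D] (X : Struc L ar D) :
    famOf P hP D X = P (CylN ar (embD D) X) := rfl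

lemma famOf_proj (P : Measure (Struc L ar ℕ)) (hP : IsProbabilityMeasure P)
    (hE : Exch ar P) : Projective (fun D [Fintype D] => famOf P hP D) := by
  intro D' D instD' instD ι X
  rw [famOf_apply, exch_cyl hE (embD D') (ι.trans (embD D)) X]
  classical
  have hset : {ω : Struc L ar D | ExtendsAlong ι X ω} = pull ι ⁻¹' {X} :=
    Set.ext fun ω => (extendsAlong_iff ι X ω).trans (by simp)
  have hdecomp : CylN ar (ι.trans (embD D)) X =
      ⋃ Y : (pull ι ⁻¹' {X} : Set (Struc L ar D)), CylN ar (embD D) (Y : Struc L ar D) := by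
    rw [cylN_eq]
    ext ω
    simp only [Set.mem_preimage, Set.mem_singleton_iff, Set.mem_iUnion, cylN_eq]
    constructor
    · intro h
      exact ⟨⟨pull (embD D) ω, h⟩, rfl⟩
    · rintro ⟨⟨Y, hY⟩, h2⟩
      have h2' : pull (embD D) ω = Y := h2
      have : pull (⇑(ι.trans (embD D))) ω = pull ι (pull (embD D) ω) := rfl
      rw [this, h2']
      exact hY
  rw [hdecomp]
  haveI := Fintype.ofFinite (Struc L ar D)
  rw [measure_iUnion ?_ (fun Y => cyl_measurable _ _)]
  · rw [hset, PMF.toOuterMeasure_apply, ← tsum_subtype]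
    rfl
  · intro Y Z hYZ
    exact cyl_pairwise_disjoint (embD D) (Subtype.coe_injective.ne hYZ)

lemma extMeasure_exch (Q : ∀ (D : Type) [Fintype D], PMF (Struc L ar D))
    (hQ : Projective Q) : Exch ar (extMeasure Q hQ) := by
  intro e n ι X
  rw [extMeasure_cyl Q hQ, extMeasure_cyl Q hQ]

/-- Two exchangeable probability measures with equal marginals are equal. -/
lemma measure_ext {P1 P2 : Measure (Struc L ar ℕ)}
    (h1 : IsProbabilityMeasure P1) (h2 : IsProbabilityMeasure P2)
    (h : ∀ (n : ℕ) (X : Struc L ar (Fin n)),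
      P1 (CylN ar Fin.valEmbedding X) = P2 (CylN ar Fin.valEmbedding X)) :
    P1 = P2 := by
  haveI := h1; haveI := h2
  refine ext_of_generate_finite (Alg L ar) localMS_eq_generateFrom_alg ?_ ?_ ?_
  · rintro A ⟨n, S, rfl⟩ B ⟨m, T, rfl⟩ -
    exact alg_inter ⟨n, S, rfl⟩ ⟨m, T, rfl⟩
  · rintro A ⟨n, S, rfl⟩
    have hdec : pullN n ⁻¹' S = ⋃ X : S, CylN ar Fin.valEmbedding (X : Struc L ar (Fin n)) := by
      ext ω
      simp only [Set.mem_preimage, Set.mem_iUnion, cylN_eq, Set.mem_singleton_iff]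
      refine ⟨fun h => ⟨⟨_, h⟩, rfl⟩, ?_⟩
      rintro ⟨⟨X, hX⟩, hh⟩
      have h' : pullN n ω = X := hh
      rw [h']
      exact hX
    haveI := Fintype.ofFinite (Struc L ar (Fin n))
    rw [hdec, measure_iUnion ?_ (fun Y => cyl_measurable _ _),
      measure_iUnion ?_ (fun Y => cyl_measurable _ _)]
    · exact tsum_congr fun X => h n X
    · intro Y Z hYZ
      exact cyl_pairwise_disjoint Fin.valEmbedding (Subtype.coe_injective.ne hYZ)
    · intro Y Z hYZ
      exact cyl_pairwise_disjoint Fin.valEmbedding (Subtype.coe_injective.ne hYZ)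
  · rw [measure_univ, measure_univ]

end St10


namespace St10

variable {L : Type} [Fintype L] {ar : L → ℕ}

noncomputable def Phi
    (P : {P : Measure (Struc L ar ℕ) // IsProbabilityMeasure P ∧ Exch ar P}) :
    {Q : ∀ (D : Type) [Fintype D], PMF (Struc L ar D) // Projective Q} :=
  ⟨fun D _ => famOf P.1 P.2.1 D, famOf_proj P.1 P.2.1 P.2.2⟩

lemma Phi_inj : Function.Injective (Phi (L := L) (ar := ar)) := by
  rintro P1 P2 h
  apply Subtype.ext
  refine measure_ext P1.2.1 P2.2.1 ?_
  intro n X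
  have hfam := congrArg Subtype.val h
  have h1 : famOf P1.1 P1.2.1 (Fin n) = famOf P2.1 P2.2.1 (Fin n) :=
    congrFun (congrFun hfam (Fin n)) (Fin.fintype n)
  have h2 := DFunLike.congr_fun h1 X
  rw [famOf_apply, famOf_apply] at h2
  calc P1.1 (CylN ar Fin.valEmbedding X)
      = P1.1 (CylN ar (embD (Fin n)) X) := exch_cyl P1.2.2 _ _ X
    _ = P2.1 (CylN ar (embD (Fin n)) X) := h2
    _ = P2.1 (CylN ar Fin.valEmbedding X) := exch_cyl P2.2.2 _ _ X

lemma Phi_surj : Function.Surjective (Phi (L := L) (ar := ar)) := by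
  rintro ⟨Q, hQ⟩
  refine ⟨⟨extMeasure Q hQ, extMeasure_prob Q hQ, extMeasure_exch Q hQ⟩, ?_⟩
  apply Subtype.ext
  funext D instD
  refine DFunLike.ext _ _ fun X => ?_
  exact extMeasure_cyl Q hQ (embD D) X

lemma Phi_prop (P : {P : Measure (Struc L ar ℕ) // IsProbabilityMeasure P ∧ Exch ar P})
    (D : Type) [Fintype D] (ι : D ↪ ℕ) (X : Struc L ar D) :
    (Phi P).1 D X = P.1 (CylN ar ι X) :=
  exch_cyl P.2.2 (embD D) ι X

end St10

/-- the assignment `P_D(X) := P(ℕ_X)` is a bijection between exchangeable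
distributions on the local σ-algebra on `ℕ` and projective families of distributions. -/
theorem stmt10 {L : Type} [Fintype L] (ar : L → ℕ) :
    ∃ Φ : {P : Measure (Struc L ar ℕ) // IsProbabilityMeasure P ∧ Exch ar P} →
        {Q : ∀ (D : Type) [Fintype D], PMF (Struc L ar D) // Projective Q},
      Function.Bijective Φ ∧
      ∀ (P : {P : Measure (Struc L ar ℕ) // IsProbabilityMeasure P ∧ Exch ar P})
        (D : Type) [Fintype D] (ι : D ↪ ℕ) (X : Struc L ar D),
        (Φ P).1 D X = P.1 (CylN ar ι X) :=
  ⟨St10.Phi, ⟨St10.Phi_inj, St10.Phi_surj⟩, fun P D _ ι X => St10.Phi_prop P D ι X⟩
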